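/- Let D ⊆ ℝ^d be a nonempty compact convex set with diameter at most Λ, let f : ℝ^d → ℝ be convex and differentiable with ∇f L-Lipschitz on ℝ^d, let M ≥ 0 satisfy ‖∇f(y)‖ ≤ M for all y ∈ D, and let x* ∈ D minimize f over D. Let T ≥ 1 and let (x_t)_{t=0}^{T−1} be defined by: x_0 ∈ D; for each t, D̂_t ⊆ ℝ^d is a nonempty compact convex set such that every z ∈ D̂_t satisfies dist(z, D) ≤ 1/(t+1) and every z ∈ D satisfies dist(z, D̂_t) ≤ 1/(t+1); v̂_t ∈ D̂_t minimizes ⟨∇f(x_t), ·⟩ over D̂_t; x_{t+1} = x_t + η_t(v̂_t − x_t) with η_t = 2/(t+2); and x_t ∈ D for all t ≤ T − 1. Then f(x_{T−1}) − f(x*) ≤ 2·max{f(x_0) − f(x*), 4M, 2L(Λ + 2)²} / (T + 1). -/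

import Mathlib

local notation "⟪" x ", " y "⟫" => @inner ℝ _ _ x y

open InnerProductSpace Set

section helpers

variable {F : Type*} [NormedAddCommGroup F] [InnerProductSpace ℝ F] [CompleteSpace F]

lemma fw_line_hasDerivAt (f : F → ℝ) (f' : F → F) (hf : ∀ y, HasGradientAt f (f' y) y)
    (x y : F) (p : ℝ) :
    HasDerivAt (fun s : ℝ => f (x + s • (y - x))) ⟪f' (x + p • (y - x)), y - x⟫ p := by
  have hc : HasDerivAt (fun s : ℝ => x + s • (y - x)) (y - x) p := by
    simpa using ((hasDerivAt_id p).smul_const (y - x)).const_add x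
  have := ((hf (x + p • (y - x))).hasFDerivAt).comp_hasDerivAt p hc
  simp [InnerProductSpace.toDual_apply_apply] at this
  exact this

lemma fw_convex_grad_ineq (f : F → ℝ) (hfc : ConvexOn ℝ Set.univ f)
    (f' : F → F) (hf : ∀ y, HasGradientAt f (f' y) y) (x y : F) :
    f x + ⟪f' x, y - x⟫ ≤ f y := by
  have hg : ConvexOn ℝ Set.univ (fun s : ℝ => f (x + s • (y - x))) := by
    have h := hfc.comp_affineMap (AffineMap.lineMap x y : ℝ →ᵃ[ℝ] F)
    simp only [Set.preimage_univ] at h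
    have heq : (fun s : ℝ => f (x + s • (y - x))) =
        f ∘ (AffineMap.lineMap x y : ℝ →ᵃ[ℝ] F) := by
      funext s
      simp only [Function.comp, AffineMap.lineMap_apply_module]
      congr 1
      module
    rw [heq]
    exact h
  have hd := fw_line_hasDerivAt f f' hf x y 0
  have h := hg.le_slope_of_hasDerivAt (mem_univ (0:ℝ)) (mem_univ 1) zero_lt_one (by simpa using hd)
  rw [slope_def_field] at h
  simp at h
  linarith

lemma fw_descent (f : F → ℝ) (f' : F → F) (hf : ∀ y, HasGradientAt f (f' y) y)
    (L : ℝ) (hL : ∀ y z, ‖f' y - f' z‖ ≤ L * ‖y - z‖) (x y : F) :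
    f y ≤ f x + ⟪f' x, y - x⟫ + L / 2 * ‖y - x‖ ^ 2 := by
  set φ : ℝ → ℝ := fun s =>
    f (x + s • (y - x)) - s * ⟪f' x, y - x⟫ - L / 2 * s ^ 2 * ‖y - x‖ ^ 2 with hφ
  have hder : ∀ s : ℝ, HasDerivAt φ
      (⟪f' (x + s • (y - x)), y - x⟫ - ⟪f' x, y - x⟫ - L * s * ‖y - x‖ ^ 2) s := by
    intro s
    have h1 := fw_line_hasDerivAt f f' hf x y s
    have h2 : HasDerivAt (fun s : ℝ => s * ⟪f' x, y - x⟫) ⟪f' x, y - x⟫ s := by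
      simpa using (hasDerivAt_id s).mul_const ⟪f' x, y - x⟫
    have h3 : HasDerivAt (fun s : ℝ => L / 2 * s ^ 2 * ‖y - x‖ ^ 2)
        (L * s * ‖y - x‖ ^ 2) s := by
      have := ((hasDerivAt_pow 2 s).const_mul (L / 2)).mul_const (‖y - x‖ ^ 2)
      exact this.congr_deriv (by push_cast; ring)
    rw [hφ]; exact (h1.sub h2).sub h3
  have hanti : AntitoneOn φ (Icc (0:ℝ) 1) := by
    apply antitoneOn_of_deriv_nonpos (convex_Icc 0 1)
    · exact fun s _ => ((hder s).continuousAt).continuousWithinAt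
    · exact fun s _ => ((hder s).differentiableAt).differentiableWithinAt
    · intro s hs
      rw [interior_Icc] at hs
      rw [(hder s).deriv]
      have hcs : ⟪f' (x + s • (y - x)) - f' x, y - x⟫ ≤
          ‖f' (x + s • (y - x)) - f' x‖ * ‖y - x‖ := real_inner_le_norm _ _
      have hlip : ‖f' (x + s • (y - x)) - f' x‖ ≤ L * (s * ‖y - x‖) := by
        have := hL (x + s • (y - x)) x
        simpa [norm_smul, abs_of_nonneg hs.1.le] using this
      have h0 : (0:ℝ) ≤ ‖y - x‖ := norm_nonneg _
      have := inner_sub_left (𝕜 := ℝ) (f' (x + s • (y - x))) (f' x) (y - x)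
      nlinarith [mul_le_mul_of_nonneg_right hlip h0]
  have h01 := hanti (left_mem_Icc.2 zero_le_one) (right_mem_Icc.2 zero_le_one) zero_le_one
  simp [hφ] at h01
  linarith

end helpers

set_option maxHeartbeats 1000000 in
/-- `O(1/T)` convergence of Reliable Frank–Wolfe in the convex,
exact-gradient setting: with feasible-set estimates `D̂_t` accurate to within `1/(t+1)` in both
directions, Frank–Wolfe directions `v̂_t` minimizing `⟨∇f(x_t), ·⟩` over `D̂_t`, step sizes
`η_t = 2/(t+2)`, and all iterates feasible, one has
`f(x_{T−1}) − f(x*) ≤ 2 max{f(x_0) − f(x*), 4M, 2L(Λ+2)²}/(T+1)`. -/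
theorem reliable_fw_convex_convergence
    (d : ℕ) (D : Set (EuclideanSpace ℝ (Fin d)))
    (hDne : D.Nonempty) (hDcp : IsCompact D) (hDcv : Convex ℝ D)
    (Λ : ℝ) (hΛ : ∀ x ∈ D, ∀ y ∈ D, ‖x - y‖ ≤ Λ)
    (f : EuclideanSpace ℝ (Fin d) → ℝ) (hfc : ConvexOn ℝ Set.univ f)
    (f' : EuclideanSpace ℝ (Fin d) → EuclideanSpace ℝ (Fin d))
    (hf : ∀ y, HasGradientAt f (f' y) y)
    (L : ℝ) (hL : ∀ y z, ‖f' y - f' z‖ ≤ L * ‖y - z‖)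
    (M : ℝ) (hM0 : 0 ≤ M) (hM : ∀ y ∈ D, ‖f' y‖ ≤ M)
    (xstar : EuclideanSpace ℝ (Fin d)) (hxs : xstar ∈ D)
    (hminf : ∀ y ∈ D, f xstar ≤ f y)
    (T : ℕ) (hT : 1 ≤ T)
    (x vhat : ℕ → EuclideanSpace ℝ (Fin d))
    (Dhat : ℕ → Set (EuclideanSpace ℝ (Fin d)))
    (hx0 : x 0 ∈ D)
    (hDh : ∀ t < T, (Dhat t).Nonempty ∧ IsCompact (Dhat t) ∧ Convex ℝ (Dhat t))
    (h1 : ∀ t < T, ∀ z ∈ Dhat t, Metric.infDist z D ≤ 1 / ((t : ℝ) + 1))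
    (h2 : ∀ t < T, ∀ z ∈ D, Metric.infDist z (Dhat t) ≤ 1 / ((t : ℝ) + 1))
    (hvh : ∀ t < T, vhat t ∈ Dhat t ∧
      ∀ w ∈ Dhat t, ⟪f' (x t), vhat t⟫ ≤ ⟪f' (x t), w⟫)
    (hupd : ∀ t, t + 1 < T →
      x (t + 1) = x t + (2 / ((t : ℝ) + 2)) • (vhat t - x t))
    (hsafe : ∀ t < T, x t ∈ D) :
    f (x (T - 1)) - f xstar ≤
      2 * max (max (f (x 0) - f xstar) (4 * M)) (2 * L * (Λ + 2) ^ 2) / ((T : ℝ) + 1) := by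
  rcases subsingleton_or_nontrivial (EuclideanSpace ℝ (Fin d)) with hsub | hnt
  · have hx : x (T - 1) = xstar := Subsingleton.elim _ _
    rw [hx, sub_self]
    apply div_nonneg
    · have h4M : (0:ℝ) ≤ 4 * M := by linarith
      have : (0:ℝ) ≤ max (max (f (x 0) - f xstar) (4 * M)) (2 * L * (Λ + 2) ^ 2) :=
        le_trans h4M (le_max_of_le_left (le_max_right _ _))
      linarith
    · positivity
  · -- L is nonnegative
    have hL0 : 0 ≤ L := by
      obtain ⟨y, z, hyz⟩ := exists_pair_ne (EuclideanSpace ℝ (Fin d))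
      have hn : 0 < ‖y - z‖ := by
        rw [norm_pos_iff, sub_ne_zero]; exact hyz
      by_contra h
      push_neg at h
      have := (norm_nonneg (f' y - f' z)).trans (hL y z)
      nlinarith
    set C := max (max (f (x 0) - f xstar) (4 * M)) (2 * L * (Λ + 2) ^ 2) with hCdef
    have hMC : 4 * M ≤ C := le_max_of_le_left (le_max_right _ _)
    have hC0 : 0 ≤ C := by linarith
    have hLC : 2 * L * (Λ + 2) ^ 2 ≤ C := le_max_right _ _
    have h0C : f (x 0) - f xstar ≤ C := le_max_of_le_left (le_max_left _ _)
    have hΛ0 : 0 ≤ Λ := by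
      have := hΛ _ hx0 _ hx0
      simpa using this
    have claim : ∀ t, t < T → f (x t) - f xstar ≤ 2 * C / ((t : ℝ) + 2) := by
      intro t
      induction t with
      | zero =>
        intro _
        have : 2 * C / ((0:ℕ) + 2 : ℝ) = C := by norm_num
        rw [this]
        exact h0C
      | succ t ih =>
        intro hlt
        have htT : t < T := Nat.lt_of_succ_lt hlt
        have ht := ih htT
        have hτ : (0:ℝ) ≤ (t:ℝ) := Nat.cast_nonneg t
        have hτ2 : (0:ℝ) < (t:ℝ) + 2 := by linarith
        have hτ1 : (0:ℝ) < (t:ℝ) + 1 := by linarith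
        obtain ⟨η, hη⟩ : ∃ η : ℝ, η = 2 / ((t:ℝ) + 2) := ⟨_, rfl⟩
        have hη0 : 0 ≤ η := by rw [hη]; positivity
        have hη1 : η ≤ 1 := by
          rw [hη, div_le_one hτ2]; linarith
        obtain ⟨hvmem, hvmin⟩ := hvh t htT
        obtain ⟨hDne', hDcp', hDcv'⟩ := hDh t htT
        have hxt : x t ∈ D := hsafe t htT
        -- a point of Dhat t near xstar
        obtain ⟨w, hwD, hw⟩ := hDcp'.exists_infDist_eq_dist hDne' xstar
        have hwdist : ‖xstar - w‖ ≤ 1 / ((t:ℝ) + 1) := by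
          rw [← dist_eq_norm, ← hw]
          exact h2 t htT xstar hxs
        -- a point of D near vhat t
        obtain ⟨p, hpD, hp⟩ := hDcp.exists_infDist_eq_dist hDne (vhat t)
        have hpd : ‖vhat t - p‖ ≤ 1 := by
          rw [← dist_eq_norm, ← hp]
          have := h1 t htT (vhat t) hvmem
          have h11 : 1 / ((t:ℝ) + 1) ≤ 1 := by
            rw [div_le_one hτ1]; linarith
          linarith
        have hvx : ‖vhat t - x t‖ ≤ Λ + 1 := by
          have htri : ‖vhat t - x t‖ ≤ ‖vhat t - p‖ + ‖p - x t‖ := by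
            have := norm_sub_le_norm_sub_add_norm_sub (vhat t) p (x t)
            linarith [norm_sub_le (vhat t - p) (x t - p)]
          have hpx : ‖p - x t‖ ≤ Λ := hΛ p hpD (x t) hxt
          linarith
        have hgM : ‖f' (x t)‖ ≤ M := hM _ hxt
        -- linear bound
        have hlin : ⟪f' (x t), vhat t - x t⟫ ≤ (f xstar - f (x t)) + M / ((t:ℝ) + 1) := by
          have ha : ⟪f' (x t), vhat t⟫ ≤ ⟪f' (x t), w⟫ := hvmin w hwD
          have hb : ⟪f' (x t), w - xstar⟫ ≤ M / ((t:ℝ) + 1) := by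
            calc ⟪f' (x t), w - xstar⟫ ≤ ‖f' (x t)‖ * ‖w - xstar‖ := real_inner_le_norm _ _
              _ ≤ M * (1 / ((t:ℝ) + 1)) := by
                  apply mul_le_mul hgM _ (norm_nonneg _) hM0
                  rw [norm_sub_rev]; exact hwdist
              _ = M / ((t:ℝ) + 1) := by ring
          have hc : f (x t) + ⟪f' (x t), xstar - x t⟫ ≤ f xstar :=
            fw_convex_grad_ineq f hfc f' hf (x t) xstar
          have e1 : ⟪f' (x t), vhat t - x t⟫ = ⟪f' (x t), vhat t⟫ - ⟪f' (x t), x t⟫ :=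
            inner_sub_right _ _ _
          have e2 : ⟪f' (x t), w - xstar⟫ = ⟪f' (x t), w⟫ - ⟪f' (x t), xstar⟫ :=
            inner_sub_right _ _ _
          have e3 : ⟪f' (x t), xstar - x t⟫ = ⟪f' (x t), xstar⟫ - ⟪f' (x t), x t⟫ :=
            inner_sub_right _ _ _
          linarith
        -- descent step
        have hxsucc := hupd t hlt
        have hdiff : x (t + 1) - x t = η • (vhat t - x t) := by
          rw [hxsucc, hη]; abel
        have hdesc : f (x (t + 1)) ≤ f (x t) + η * ⟪f' (x t), vhat t - x t⟫
            + L / 2 * (η ^ 2 * ‖vhat t - x t‖ ^ 2) := by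
          have hd := fw_descent f f' hf L hL (x t) (x (t + 1))
          rw [hdiff] at hd
          have e4 : ⟪f' (x t), η • (vhat t - x t)⟫ = η * ⟪f' (x t), vhat t - x t⟫ :=
            real_inner_smul_right _ _ _
          have e5 : ‖η • (vhat t - x t)‖ ^ 2 = η ^ 2 * ‖vhat t - x t‖ ^ 2 := by
            rw [norm_smul, mul_pow, Real.norm_eq_abs, sq_abs]
          rw [e4, e5] at hd
          linarith
        have hq : ‖vhat t - x t‖ ^ 2 ≤ (Λ + 2) ^ 2 := by
          nlinarith [norm_nonneg (vhat t - x t)]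
        -- recursion
        have hq' : L / 2 * (η ^ 2 * ‖vhat t - x t‖ ^ 2) ≤ L / 2 * (η ^ 2 * (Λ + 2) ^ 2) := by
          apply mul_le_mul_of_nonneg_left _ (by linarith)
          exact mul_le_mul_of_nonneg_left hq (by positivity)
        have hmul : η * ⟪f' (x t), vhat t - x t⟫ ≤
            η * f xstar - η * f (x t) + η * M / ((t:ℝ) + 1) := by
          have := mul_le_mul_of_nonneg_left hlin hη0
          have e7 : η * (f xstar - f (x t) + M / ((t:ℝ) + 1))
              = η * f xstar - η * f (x t) + η * M / ((t:ℝ) + 1) := by ring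
          linarith [e7 ▸ this]
        have hrec : f (x (t + 1)) - f xstar ≤
            (f (x t) - f xstar) + (η * f xstar - η * f (x t)) + η * M / ((t:ℝ) + 1)
              + L / 2 * (η ^ 2 * (Λ + 2) ^ 2) := by
          linarith
        have hstep : f (x (t + 1)) - f xstar ≤
            (1 - η) * (2 * C / ((t:ℝ) + 2)) + η * (C / 4) / ((t:ℝ) + 1) + η ^ 2 / 4 * C := by
          have p1 : 0 ≤ (1 - η) * (2 * C / ((t:ℝ) + 2) - (f (x t) - f xstar)) :=
            mul_nonneg (by linarith) (by linarith)
          have p1' : 0 ≤ 2 * C / ((t:ℝ) + 2) - η * (2 * C / ((t:ℝ) + 2))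
              - (f (x t) - f xstar) - (η * f xstar - η * f (x t)) := by
            have e8 : (1 - η) * (2 * C / ((t:ℝ) + 2) - (f (x t) - f xstar))
                = 2 * C / ((t:ℝ) + 2) - η * (2 * C / ((t:ℝ) + 2))
                  - (f (x t) - f xstar) - (η * f xstar - η * f (x t)) := by ring
            linarith [e8 ▸ p1]
          have p2 : 0 ≤ (η / ((t:ℝ) + 1)) * (C / 4 - M) :=
            mul_nonneg (div_nonneg hη0 hτ1.le) (by linarith)
          have p2' : 0 ≤ η * (C / 4) / ((t:ℝ) + 1) - η * M / ((t:ℝ) + 1) := by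
            have e9 : (η / ((t:ℝ) + 1)) * (C / 4 - M)
                = η * (C / 4) / ((t:ℝ) + 1) - η * M / ((t:ℝ) + 1) := by ring
            linarith [e9 ▸ p2]
          have p3 : 0 ≤ η ^ 2 / 4 * (C - 2 * L * (Λ + 2) ^ 2) :=
            mul_nonneg (by positivity) (by linarith)

          have p3' : 0 ≤ η ^ 2 / 4 * C - L / 2 * (η ^ 2 * (Λ + 2) ^ 2) := by
            have e10 : η ^ 2 / 4 * (C - 2 * L * (Λ + 2) ^ 2)
                = η ^ 2 / 4 * C - L / 2 * (η ^ 2 * (Λ + 2) ^ 2) := by ring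
            linarith [e10 ▸ p3]
          have e11 : (1 - η) * (2 * C / ((t:ℝ) + 2))
              = 2 * C / ((t:ℝ) + 2) - η * (2 * C / ((t:ℝ) + 2)) := by ring
          rw [e11]
          linarith
        have hnum : (1 - 2 / ((t:ℝ) + 2)) * (2 / ((t:ℝ) + 2))
            + (2 / ((t:ℝ) + 2)) * (1 / 4) / ((t:ℝ) + 1) + (2 / ((t:ℝ) + 2)) ^ 2 / 4
            ≤ 2 / ((t:ℝ) + 3) := by
          have hτ3 : (0:ℝ) < (t:ℝ) + 3 := by linarith
          have e : 2 / ((t:ℝ) + 3) - ((1 - 2 / ((t:ℝ) + 2)) * (2 / ((t:ℝ) + 2))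
              + (2 / ((t:ℝ) + 2)) * (1 / 4) / ((t:ℝ) + 1) + (2 / ((t:ℝ) + 2)) ^ 2 / 4)
              = ((t:ℝ) ^ 2 + 7 * (t:ℝ) + 4)
                / (2 * ((t:ℝ) + 1) * ((t:ℝ) + 2) ^ 2 * ((t:ℝ) + 3)) := by
            field_simp
            ring
          have hpos : 0 ≤ ((t:ℝ) ^ 2 + 7 * (t:ℝ) + 4)
              / (2 * ((t:ℝ) + 1) * ((t:ℝ) + 2) ^ 2 * ((t:ℝ) + 3)) := by positivity
          linarith [e, hpos]
        have key : (1 - η) * (2 * C / ((t:ℝ) + 2)) + η * (C / 4) / ((t:ℝ) + 1) + η ^ 2 / 4 * C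
            ≤ 2 * C / ((t:ℝ) + 3) := by
          calc (1 - η) * (2 * C / ((t:ℝ) + 2)) + η * (C / 4) / ((t:ℝ) + 1) + η ^ 2 / 4 * C
              = C * ((1 - 2 / ((t:ℝ) + 2)) * (2 / ((t:ℝ) + 2))
                + (2 / ((t:ℝ) + 2)) * (1 / 4) / ((t:ℝ) + 1) + (2 / ((t:ℝ) + 2)) ^ 2 / 4) := by
                rw [hη]; ring
            _ ≤ C * (2 / ((t:ℝ) + 3)) := mul_le_mul_of_nonneg_left hnum hC0
            _ = 2 * C / ((t:ℝ) + 3) := by ring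
        have ecast : ((t + 1 : ℕ) : ℝ) + 2 = (t:ℝ) + 3 := by push_cast; ring
        rw [ecast]
        linarith
    have hfin := claim (T - 1) (by omega)
    have ecast : ((T - 1 : ℕ) : ℝ) + 2 = (T : ℝ) + 1 := by
      have : ((T - 1 : ℕ) : ℝ) = (T : ℝ) - 1 := by
        rw [Nat.cast_sub hT]; norm_num
      rw [this]; ring
    rw [ecast] at hfin
    exact hfin
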